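/- Let K be an algebraically closed field, k ∈ ℕ, and λ = (λ₁,…,λ_e) a partition of k. The set X_λ = { (a₀:…:a_k) ∈ ℙ^k(K) | Σ_{j=0}^k a_j x^{k-j} y^j = ∏_{i=1}^e L_i^{λ_i} for some linear forms L_i ∈ K[x,y]₁ } is a Zariski-closed subset of ℙ^k(K). -/

import Mathlib

set_option maxHeartbeats 1000000

open MvPolynomial

/-- The binary form `Σ_{j=0}^k a_j x^{k-j} y^j` associated to a coefficient vector `a`. -/
noncomputable def binForm {K : Type*} [Field K] (k : ℕ) (a : Fin (k + 1) → K) :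
    MvPolynomial (Fin 2) K :=
  ∑ j : Fin (k + 1), C (a j) * X 0 ^ (k - (j : ℕ)) * X 1 ^ (j : ℕ)

/-- The affine cone over the coincident root locus `X_λ ⊆ ℙ^k`: coefficient vectors `a`
such that `Σ a_j x^{k-j} y^j = ∏ L_i^{λ_i}` for some (not necessarily distinct) linear
forms `L_i ∈ K[x,y]₁`. -/
def crCone {K : Type*} [Field K] (k : ℕ) {e : ℕ} (lam : Fin e → ℕ) :
    Set (Fin (k + 1) → K) :=
  {a | ∃ L : Fin e → MvPolynomial (Fin 2) K, (∀ i, (L i).IsHomogeneous 1) ∧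
    binForm k a = ∏ i, L i ^ lam i}

/-- exponent of the monomial x^(k-j) y^j -/
noncomputable def mexp (k j : ℕ) : Fin 2 →₀ ℕ := Finsupp.single 0 (k - j) + Finsupp.single 1 j

lemma mexp_inj {k : ℕ} {i j : ℕ} (h : mexp k i = mexp k j) : i = j := by
  have := DFunLike.congr_fun h 1
  simpa [mexp] using this

lemma degree_fin2 (d : Fin 2 →₀ ℕ) : d.degree = d 0 + d 1 := by
  rw [Finsupp.degree_apply, Finset.sum_subset (Finset.subset_univ d.support)]
  · rw [Fin.sum_univ_two]
  · intro x _ hx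
    simpa using hx

lemma mexp_degree (k j : ℕ) (hj : j ≤ k) : (mexp k j).degree = k := by
  rw [degree_fin2]
  simp [mexp]
  omega

lemma term_eq_monomial {K : Type*} [Field K] (k j : ℕ) (c : K) :
    (C c * X 0 ^ (k - j) * X 1 ^ j : MvPolynomial (Fin 2) K) = monomial (mexp k j) c := by
  rw [X_pow_eq_monomial, X_pow_eq_monomial, C_mul_monomial, monomial_mul, mexp]
  simp

lemma coeff_binForm {K : Type*} [Field K] (k : ℕ) (a : Fin (k + 1) → K) (j : Fin (k + 1)) :
    coeff (mexp k j) (binForm k a) = a j := by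
  rw [binForm]
  simp_rw [term_eq_monomial]
  rw [coeff_sum]
  rw [Finset.sum_eq_single j]
  · simp [coeff_monomial]
  · intro i _ hij
    rw [coeff_monomial, if_neg]
    intro h
    exact hij (Fin.ext (mexp_inj h))
  · simp

lemma binForm_injective {K : Type*} [Field K] (k : ℕ) :
    Function.Injective (binForm (K := K) k) := by
  intro a b h
  funext j
  rw [← coeff_binForm k a j, ← coeff_binForm k b j, h]

lemma isHomogeneous_binForm {K : Type*} [Field K] (k : ℕ) (a : Fin (k + 1) → K) :
    (binForm k a).IsHomogeneous k := by
  apply IsHomogeneous.sum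
  intro j _
  rw [term_eq_monomial]
  exact isHomogeneous_monomial _ (mexp_degree k j j.is_le)

/-- structure lemma: any homogeneous polynomial of degree k in two variables is a binForm -/
lemma isHomogeneous_eq_binForm {K : Type*} [Field K] {k : ℕ} {g : MvPolynomial (Fin 2) K}
    (hg : g.IsHomogeneous k) :
    g = binForm k (fun j => coeff (mexp k j) g) := by
  apply MvPolynomial.ext
  intro d
  by_cases hd : ∃ j : Fin (k+1), d = mexp k j
  · obtain ⟨j, rfl⟩ := hd
    rw [coeff_binForm]
  · have hdg : coeff d g = 0 := by
      apply hg.coeff_eq_zero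
      intro hdeg
      have hds : d 0 + d 1 = k := by rw [← degree_fin2, hdeg]
      apply hd
      refine ⟨⟨d 1, by omega⟩, ?_⟩
      ext x
      fin_cases x <;> simp [mexp] <;> omega
    rw [hdg]
    symm
    rw [binForm]
    simp_rw [term_eq_monomial]
    rw [coeff_sum]
    apply Finset.sum_eq_zero
    intro j _
    rw [coeff_monomial, if_neg]
    intro h
    exact hd ⟨j, h.symm⟩

section Part2
variable {K : Type*} [Field K]

/-- substitute x ↦ z, y ↦ 1 -/
noncomputable def toUni : MvPolynomial (Fin 2) K →ₐ[K] Polynomial K :=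
  aeval ![Polynomial.X, 1]

lemma toUni_binForm (k : ℕ) (a : Fin (k + 1) → K) :
    toUni (binForm k a) = ∑ j : Fin (k + 1), Polynomial.C (a j) * Polynomial.X ^ (k - (j : ℕ)) := by
  rw [binForm, toUni, map_sum]
  congr 1
  funext j
  simp [Matrix.cons_val_zero, Matrix.cons_val_one]

lemma coeff_sumform (k : ℕ) (a : Fin (k + 1) → K) (j₀ : Fin (k + 1)) :
    (∑ j : Fin (k + 1), Polynomial.C (a j) * Polynomial.X ^ (k - (j : ℕ))).coeff (k - (j₀ : ℕ))
      = a j₀ := by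
  rw [Polynomial.finset_sum_coeff]
  rw [Finset.sum_eq_single j₀]
  · simp [Polynomial.coeff_C_mul, Polynomial.coeff_X_pow]
  · intro i _ hij
    rw [Polynomial.coeff_C_mul, Polynomial.coeff_X_pow, if_neg, mul_zero]
    intro h
    apply hij
    have hi := i.is_le
    have hj := j₀.is_le
    exact Fin.ext (by omega)
  · simp

lemma coeff_sumform_gt (k : ℕ) (a : Fin (k + 1) → K) (r : ℕ) (hr : k < r) :
    (∑ j : Fin (k + 1), Polynomial.C (a j) * Polynomial.X ^ (k - (j : ℕ))).coeff r = 0 := by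
  rw [Polynomial.finset_sum_coeff]
  apply Finset.sum_eq_zero
  intro i _
  rw [Polynomial.coeff_C_mul, Polynomial.coeff_X_pow, if_neg (by omega), mul_zero]

/-- the shear substitution x ↦ x, y ↦ s x + y -/
noncomputable def shearSub (s : K) : MvPolynomial (Fin 2) K →ₐ[K] MvPolynomial (Fin 2) K :=
  aeval ![X 0, C s * X 0 + X 1]

/-- linear polynomial expressing coefficient i of the sheared form -/
noncomputable def shearPoly (k : ℕ) (s : K) (i : Fin (k + 1)) :
    MvPolynomial (Fin (k + 1)) K :=
  ∑ j : Fin (k + 1), if (i : ℕ) ≤ (j : ℕ) then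
      C (((j : ℕ).choose (i : ℕ) : K) * s ^ ((j : ℕ) - (i : ℕ))) * X j else 0

noncomputable def shear (k : ℕ) (s : K) (a : Fin (k + 1) → K) : Fin (k + 1) → K :=
  fun i => eval a (shearPoly k s i)

lemma isHomogeneous_shearPoly (k : ℕ) (s : K) (i : Fin (k + 1)) :
    (shearPoly k s i).IsHomogeneous 1 := by
  apply IsHomogeneous.sum
  intro j _
  split
  · exact isHomogeneous_C_mul_X _ _
  · exact isHomogeneous_zero _ _ _

lemma shear_apply (k : ℕ) (s : K) (a : Fin (k + 1) → K) (i : Fin (k + 1)) :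
    shear k s a i = ∑ j : Fin (k + 1), if (i : ℕ) ≤ (j : ℕ) then
      ((j : ℕ).choose (i : ℕ) : K) * s ^ ((j : ℕ) - (i : ℕ)) * a j else 0 := by
  rw [shear, shearPoly, map_sum]
  congr 1
  funext j
  split <;> simp

/-- Key expansion: the sheared binForm is the binForm of the sheared coefficients. -/
lemma binForm_shear (k : ℕ) (s : K) (a : Fin (k + 1) → K) :
    binForm k (shear k s a) = shearSub s (binForm k a) := by
  rw [show binForm k a = ∑ j : Fin (k + 1), C (a j) * X 0 ^ (k - (j : ℕ)) * X 1 ^ (j : ℕ) from rfl,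
    shearSub, map_sum]
  have lhs : binForm k (shear k s a)
      = ∑ i : Fin (k + 1), ∑ j : Fin (k + 1), (if (i : ℕ) ≤ (j : ℕ) then
          C (((j : ℕ).choose (i : ℕ) : K) * s ^ ((j : ℕ) - (i : ℕ)) * a j)
            * X 0 ^ (k - (i : ℕ)) * X 1 ^ (i : ℕ) else 0) := by
    rw [show binForm k (shear k s a) = ∑ i : Fin (k + 1), C (shear k s a i)
        * X 0 ^ (k - (i : ℕ)) * X 1 ^ (i : ℕ) from rfl]
    congr 1
    funext i
    rw [shear_apply, map_sum, Finset.sum_mul, Finset.sum_mul]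
    congr 1
    funext j
    split <;> simp
  rw [lhs, Finset.sum_comm]
  congr 1
  funext j
  rw [map_mul, map_mul, aeval_C, map_pow, map_pow, aeval_X, aeval_X]
  show _ = algebraMap K _ (a j) * (X 0 : MvPolynomial (Fin 2) K) ^ (k - (j:ℕ))
      * (C s * X 0 + X 1) ^ (j : ℕ)
  rw [add_pow, Finset.mul_sum]
  rw [show (algebraMap K (MvPolynomial (Fin 2) K)) (a j) = C (a j) from rfl]
  rw [← Finset.sum_filter]
  symm
  have hjk := j.is_le
  apply Finset.sum_nbij' (i := fun m => (⟨(j : ℕ) - m, by omega⟩ : Fin (k + 1)))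
    (j := fun i => (j : ℕ) - (i : ℕ))
  · intro m hm
    simp only [Finset.mem_range] at hm
    simp only [Finset.mem_filter, Finset.mem_univ, true_and, Fin.val_mk]
    omega
  · intro i hi
    simp only [Finset.mem_filter, Finset.mem_univ, true_and] at hi
    simp only [Finset.mem_range]
    omega
  · intro m hm
    simp only [Finset.mem_range] at hm
    simp only [Fin.val_mk]
    omega
  · intro i hi
    simp only [Finset.mem_filter, Finset.mem_univ, true_and] at hi
    apply Fin.ext
    simp only [Fin.val_mk]
    omega
  · intro m hm
    simp only [Finset.mem_range] at hm
    simp only [Fin.val_mk]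
    rw [Nat.choose_symm (by omega : m ≤ (j : ℕ)),
      show (j:ℕ) - ((j:ℕ) - m) = m by omega,
      show k - ((j:ℕ) - m) = (k - (j:ℕ)) + m by omega,
      mul_pow, ← map_pow C s, pow_add, map_mul, map_mul]
    rw [show (C (((j:ℕ).choose m : ℕ) : K) : MvPolynomial (Fin 2) K)
      = (((j:ℕ).choose m : ℕ) : MvPolynomial (Fin 2) K) from map_natCast C _]
    ring

end Part2

section Part3
variable {K : Type*} [Field K]

lemma shearSub_isHomogeneous {s : K} {L : MvPolynomial (Fin 2) K} {n : ℕ}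
    (hL : L.IsHomogeneous n) : (shearSub s L).IsHomogeneous n := by
  have hg : ∀ i : Fin 2, ((![X 0, C s * X 0 + X 1] : Fin 2 → MvPolynomial (Fin 2) K) i).IsHomogeneous 1 := by
    intro i
    fin_cases i
    · simpa using isHomogeneous_X K (0 : Fin 2)
    · simp only [Matrix.cons_val_one, Matrix.head_cons]
      exact (isHomogeneous_C_mul_X s 0).add (isHomogeneous_X K (1 : Fin 2))
  have h := hL.aeval (![X 0, C s * X 0 + X 1] : Fin 2 → MvPolynomial (Fin 2) K) hg
  rw [one_mul] at h
  exact h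

lemma shearSub_comp (s s' : K) (f : MvPolynomial (Fin 2) K) :
    shearSub s' (shearSub s f) = shearSub (s + s') f := by
  have h : (shearSub s').comp (shearSub s) = shearSub (s + s') := by
    rw [shearSub, shearSub, shearSub, comp_aeval]
    congr 1
    funext i
    fin_cases i
    · simp
    · show (aeval (![X 0, C s' * X 0 + X 1] : Fin 2 → MvPolynomial (Fin 2) K))
          (C s * X 0 + X 1) = C (s + s') * X 0 + X 1
      simp only [map_add, map_mul, aeval_C, aeval_X, Matrix.cons_val_zero, Matrix.cons_val_one,
        Matrix.head_cons, algebraMap_eq]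
      ring
  rw [← h]
  rfl

lemma shearSub_zero (f : MvPolynomial (Fin 2) K) : shearSub 0 f = f := by
  rw [shearSub]
  have h : (![X 0, C (0:K) * X 0 + X 1] : Fin 2 → MvPolynomial (Fin 2) K)
      = (X : Fin 2 → MvPolynomial (Fin 2) K) := by
    funext i
    fin_cases i <;> simp
  rw [h]
  exact aeval_X_left_apply f

lemma shear_neg_shear (k : ℕ) (s : K) (a : Fin (k + 1) → K) :
    shear k (-s) (shear k s a) = a := by
  apply binForm_injective k
  rw [binForm_shear, binForm_shear, shearSub_comp]
  simp [shearSub_zero]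

lemma crCone_shear {k e : ℕ} {lam : Fin e → ℕ} {a : Fin (k + 1) → K} (s : K)
    (ha : a ∈ crCone k lam) : shear k s a ∈ crCone k lam := by
  obtain ⟨L, hL, hprod⟩ := ha
  exact ⟨fun i => shearSub s (L i), fun i => shearSub_isHomogeneous (hL i),
    by rw [binForm_shear, hprod, map_prod]; simp⟩

lemma zero_mem_crCone {k e : ℕ} (lam : Fin e → ℕ) (hk : 0 < k) (hpos : ∀ i, 0 < lam i)
    (hsum : ∑ i, lam i = k) : (0 : Fin (k + 1) → K) ∈ crCone k lam := by
  have he : e ≠ 0 := by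
    rintro rfl
    simp at hsum
    omega
  refine ⟨fun _ => 0, fun i => isHomogeneous_zero _ _ _, ?_⟩
  have h0 : binForm k (0 : Fin (k+1) → K) = 0 := by simp [binForm]
  rw [h0]
  symm
  apply Finset.prod_eq_zero (Finset.mem_univ (⟨0, Nat.pos_of_ne_zero he⟩ : Fin e))
  exact zero_pow (hpos _).ne'

end Part3

section Part4
variable {K : Type*} [Field K]

lemma homog1_decomp {L : MvPolynomial (Fin 2) K} (hL : L.IsHomogeneous 1) :
    ∃ α β : K, L = C α * X 0 + C β * X 1 := by
  refine ⟨coeff (mexp 1 0) L, coeff (mexp 1 1) L, ?_⟩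
  have h := isHomogeneous_eq_binForm hL
  conv_lhs => rw [h]
  rw [show binForm 1 (fun j : Fin 2 => coeff (mexp 1 (j : ℕ)) L)
    = ∑ j : Fin 2, C (coeff (mexp 1 (j:ℕ)) L) * X 0 ^ (1 - (j : ℕ)) * X 1 ^ (j : ℕ) from rfl]
  rw [Fin.sum_univ_two]
  simp only [Fin.val_zero, Fin.val_one, pow_one, pow_zero, mul_one, Nat.sub_zero, Nat.sub_self]

lemma toUni_linear (α β : K) :
    toUni (C α * X 0 + C β * X 1) = Polynomial.C α * Polynomial.X + Polynomial.C β := by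
  rw [toUni]
  simp [algebraMap_eq]

/-- Direction A: a cone element with nonzero leading coefficient factors monically. -/
lemma crCone_factor {k e : ℕ} {lam : Fin e → ℕ} (hpos : ∀ i, 0 < lam i)
    (hsum : ∑ i, lam i = k) {b : Fin (k + 1) → K}
    (hb : b ∈ crCone k lam) (hb0 : b 0 ≠ 0) :
    ∃ t : Fin e → K,
      (∑ j : Fin (k + 1), Polynomial.C (b j) * Polynomial.X ^ (k - (j : ℕ)))
        = Polynomial.C (b 0) * ∏ i, (Polynomial.X - Polynomial.C (t i)) ^ lam i := by
  obtain ⟨L, hL, hprod⟩ := hb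
  choose α β hαβ using fun i => homog1_decomp (hL i)
  have hq : (∑ j : Fin (k + 1), Polynomial.C (b j) * Polynomial.X ^ (k - (j : ℕ)))
      = ∏ i, (Polynomial.C (α i) * Polynomial.X + Polynomial.C (β i)) ^ lam i := by
    rw [← toUni_binForm, hprod, map_prod]
    congr 1
    funext i
    rw [map_pow, hαβ i, toUni_linear]
  have hcoeffk : (∑ j : Fin (k + 1), Polynomial.C (b j) * Polynomial.X ^ (k - (j : ℕ))).coeff k
      = b 0 := by
    have := coeff_sumform k b 0
    simpa using this
  -- all α i are nonzero
  have hα : ∀ i, α i ≠ 0 := by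
    intro i₀ hzero
    have hdeg : (∏ i, (Polynomial.C (α i) * Polynomial.X + Polynomial.C (β i)) ^ lam i).natDegree
        < k := by
      calc (∏ i, (Polynomial.C (α i) * Polynomial.X + Polynomial.C (β i)) ^ lam i).natDegree
          ≤ ∑ i, ((Polynomial.C (α i) * Polynomial.X + Polynomial.C (β i)) ^ lam i).natDegree :=
            Polynomial.natDegree_prod_le _ _
        _ ≤ ∑ i, lam i * (if i = i₀ then 0 else 1) := by
            apply Finset.sum_le_sum
            intro i _
            refine le_trans (Polynomial.natDegree_pow_le) ?_
            apply Nat.mul_le_mul_left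
            split
            · rename_i h
              subst h
              rw [hzero]
              simp
            · apply le_trans (Polynomial.natDegree_add_le _ _)
              simp only [Polynomial.natDegree_C, le_refl, max_le_iff]
              constructor
              · exact le_trans (Polynomial.natDegree_mul_le) (by simp)
              · omega
        _ ≤ ∑ i ∈ Finset.univ.erase i₀, lam i := by
            rw [← Finset.sum_erase_add _ _ (Finset.mem_univ i₀), if_pos rfl, mul_zero, add_zero]
            apply Finset.sum_le_sum
            intro i hi
            split <;> omega
        _ < k := by
            have hsplit : ∑ i ∈ Finset.univ.erase i₀, lam i + lam i₀ = k := by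
              rw [Finset.sum_erase_add _ _ (Finset.mem_univ i₀)]
              exact hsum
            have := hpos i₀
            omega
    rw [← hq] at hdeg
    exact hb0 (by rw [← hcoeffk, Polynomial.coeff_eq_zero_of_natDegree_lt hdeg])
  refine ⟨fun i => -(β i) / α i, ?_⟩
  have hfac : ∀ i, Polynomial.C (α i) * Polynomial.X + Polynomial.C (β i)
      = Polynomial.C (α i) * (Polynomial.X - Polynomial.C (-(β i) / α i)) := by
    intro i
    have hval : -(β i) / α i * α i = -(β i) := div_mul_cancel₀ _ (hα i)
    rw [mul_sub, ← Polynomial.C_mul, mul_comm (α i) (-(β i) / α i), hval, Polynomial.C_neg,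
      sub_neg_eq_add]
  have hmonic : (∏ i, (Polynomial.X - Polynomial.C (-(β i) / α i)) ^ lam i).Monic :=
    Polynomial.monic_prod_of_monic _ _ fun i _ => (Polynomial.monic_X_sub_C _).pow _
  have hdegM : (∏ i, (Polynomial.X - Polynomial.C (-(β i) / α i)) ^ lam i).natDegree = k := by
    rw [Polynomial.natDegree_prod _ _ (fun i _ => ((Polynomial.monic_X_sub_C _).pow _).ne_zero)]
    simp_rw [Polynomial.natDegree_pow, Polynomial.natDegree_X_sub_C, mul_one]
    exact hsum
  have hq2 : (∑ j : Fin (k + 1), Polynomial.C (b j) * Polynomial.X ^ (k - (j : ℕ)))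
      = Polynomial.C (∏ i, (α i) ^ lam i)
        * ∏ i, (Polynomial.X - Polynomial.C (-(β i) / α i)) ^ lam i := by
    rw [hq]
    simp_rw [hfac, mul_pow]
    rw [Finset.prod_mul_distrib, map_prod]
    simp_rw [map_pow]
  have hu : (∏ i, (α i) ^ lam i) = b 0 := by
    have h1 := congrArg (fun p => Polynomial.coeff p k) hq2
    rw [hcoeffk, Polynomial.coeff_C_mul] at h1
    rw [h1]
    rw [show k = (∏ i, (Polynomial.X - Polynomial.C (-(β i) / α i)) ^ lam i).natDegree
      from hdegM.symm, hmonic.coeff_natDegree, mul_one]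
  rw [hq2, hu]

end Part4

section Part5
variable (K : Type*) [Field K] [IsAlgClosed K] (k e : ℕ) (lam : Fin e → ℕ)

noncomputable def rootProdB : Polynomial (MvPolynomial (Fin e) K) :=
  ∏ i, (Polynomial.X - Polynomial.C (X i)) ^ lam i

noncomputable def psiMap : MvPolynomial (Fin (k + 1)) K →ₐ[K] MvPolynomial (Fin e) K :=
  aeval fun j : Fin (k + 1) => (rootProdB K e lam).coeff (k - (j : ℕ))

variable {K k e lam}

omit [IsAlgClosed K] in
lemma rootProdB_monic : (rootProdB K e lam).Monic :=
  Polynomial.monic_prod_of_monic _ _ fun _ _ => (Polynomial.monic_X_sub_C _).pow _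

omit [IsAlgClosed K] in
lemma rootProdB_natDegree (hsum : ∑ i, lam i = k) : (rootProdB K e lam).natDegree = k := by
  rw [rootProdB, Polynomial.natDegree_prod _ _
    (fun i _ => ((Polynomial.monic_X_sub_C _).pow _).ne_zero)]
  simp_rw [Polynomial.natDegree_pow, Polynomial.natDegree_X_sub_C, mul_one]
  exact hsum

omit [IsAlgClosed K] in
lemma map_rootProdB (t : Fin e → K) :
    (rootProdB K e lam).map (eval t) = ∏ i, (Polynomial.X - Polynomial.C (t i)) ^ lam i := by
  rw [rootProdB, Polynomial.map_prod]
  congr 1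
  funext i
  rw [Polynomial.map_pow, Polynomial.map_sub, Polynomial.map_X, Polynomial.map_C]
  simp

omit [IsAlgClosed K] in
lemma psiMap_X (j : Fin (k + 1)) :
    psiMap K k e lam (X j) = (rootProdB K e lam).coeff (k - (j : ℕ)) := by
  rw [psiMap, aeval_X]

/-- Key lifting lemma: any point where the kernel of `psiMap` vanishes comes from
an actual root configuration `t`. -/
lemma lift_point (hk : 0 < k) (hpos : ∀ i, 0 < lam i) (hsum : ∑ i, lam i = k)
    (v : Fin (k + 1) → K)
    (hv : ∀ p ∈ RingHom.ker (psiMap K k e lam).toRingHom, aeval v p = 0) :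
    ∃ t : Fin e → K, ∀ j : Fin (k + 1),
      v j = (∏ i, (Polynomial.X - Polynomial.C (t i)) ^ lam i).coeff (k - (j : ℕ)) := by
  classical
  let ψ := psiMap K k e lam
  let I : Ideal (MvPolynomial (Fin (k + 1)) K) := RingHom.ker ψ.toRingHom
  let ι : (MvPolynomial (Fin (k + 1)) K ⧸ I) →ₐ[K] MvPolynomial (Fin e) K :=
    Ideal.Quotient.liftₐ I ψ (fun a ha => RingHom.mem_ker.mp ha)
  let χ : (MvPolynomial (Fin (k + 1)) K ⧸ I) →ₐ[K] K := Ideal.Quotient.liftₐ I (aeval v) hv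
  have hιmk : ∀ x, ι (Ideal.Quotient.mk I x) = ψ x := by
    intro x
    rw [show ι (Ideal.Quotient.mk I x) = Ideal.Quotient.lift I ψ.toRingHom _
      (Ideal.Quotient.mk I x) from Ideal.Quotient.liftₐ_apply .., Ideal.Quotient.lift_mk]
    rfl
  have hχmk : ∀ x, χ (Ideal.Quotient.mk I x) = aeval v x := by
    intro x
    rw [show χ (Ideal.Quotient.mk I x) = Ideal.Quotient.lift I (aeval v).toRingHom hv
      (Ideal.Quotient.mk I x) from Ideal.Quotient.liftₐ_apply .., Ideal.Quotient.lift_mk]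
    rfl
  have hInj : Function.Injective ι := by
    intro x y hxy
    obtain ⟨x', rfl⟩ := Ideal.Quotient.mk_surjective x
    obtain ⟨y', rfl⟩ := Ideal.Quotient.mk_surjective y
    rw [hιmk, hιmk] at hxy
    rw [Ideal.Quotient.eq]
    show x' - y' ∈ RingHom.ker ψ.toRingHom
    rw [RingHom.mem_ker]
    show ψ (x' - y') = 0
    rw [map_sub, hxy, sub_self]
  letI : Algebra (MvPolynomial (Fin (k + 1)) K ⧸ I) (MvPolynomial (Fin e) K) :=
    ι.toRingHom.toAlgebra
  have halg : (algebraMap (MvPolynomial (Fin (k + 1)) K ⧸ I) (MvPolynomial (Fin e) K))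
      = ι.toRingHom := rfl
  haveI : IsScalarTower K (MvPolynomial (Fin (k + 1)) K ⧸ I) (MvPolynomial (Fin e) K) :=
    IsScalarTower.of_algebraMap_eq (fun c => by
      show C c = ι (algebraMap K _ c)
      have h1 : algebraMap K (MvPolynomial (Fin (k + 1)) K ⧸ I) c
          = Ideal.Quotient.mk I (C c) := rfl
      rw [h1, hιmk]
      show C c = ψ (C c)
      rw [algHom_C]
      rfl)
  have hGmonic : (rootProdB K e lam).Monic := rootProdB_monic
  have hGdeg : (rootProdB K e lam).natDegree = k := rootProdB_natDegree hsum
  let Gq : Polynomial (MvPolynomial (Fin (k + 1)) K ⧸ I) := Polynomial.X ^ k +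
    ∑ r ∈ Finset.range k,
      Polynomial.C (Ideal.Quotient.mk I (X (⟨k - r, by omega⟩ : Fin (k + 1))))
        * Polynomial.X ^ r
  have hGqmonic : Gq.Monic := by
    apply Polynomial.monic_X_pow_add
    apply lt_of_le_of_lt (Polynomial.degree_sum_le _ _)
    rw [Finset.sup_lt_iff (show (⊥ : WithBot ℕ) < (k : ℕ) from WithBot.bot_lt_coe k)]
    intro r hr
    apply lt_of_le_of_lt (Polynomial.degree_C_mul_X_pow_le _ _)
    exact_mod_cast Finset.mem_range.mp hr
  have hGqmap : Gq.map (algebraMap _ (MvPolynomial (Fin e) K)) = rootProdB K e lam := by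
    rw [show Gq = Polynomial.X ^ k + ∑ r ∈ Finset.range k,
      Polynomial.C (Ideal.Quotient.mk I (X (⟨k - r, by omega⟩ : Fin (k + 1))))
        * Polynomial.X ^ r from rfl]
    rw [Polynomial.map_add, Polynomial.map_pow, Polynomial.map_X, Polynomial.map_sum]
    have hterm : ∀ r ∈ Finset.range k,
        (Polynomial.C (Ideal.Quotient.mk I (X (⟨k - r, by omega⟩ : Fin (k + 1))))
          * Polynomial.X ^ r).map (algebraMap _ (MvPolynomial (Fin e) K))
        = Polynomial.C ((rootProdB K e lam).coeff r) * Polynomial.X ^ r := by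
      intro r hr
      rw [Polynomial.map_mul, Polynomial.map_pow, Polynomial.map_X, Polynomial.map_C]
      congr 2
      rw [halg]
      show ι (Ideal.Quotient.mk I _) = _
      rw [hιmk]
      show ψ (X _) = _
      rw [psiMap_X]
      simp only [Fin.val_mk]
      rw [Nat.sub_sub_self (le_of_lt (Finset.mem_range.mp hr))]
    rw [Finset.sum_congr rfl hterm]
    have hGsum := Polynomial.as_sum_range' (rootProdB K e lam) (k + 1) (by omega)
    rw [Finset.sum_range_succ] at hGsum
    have hck : (rootProdB K e lam).coeff k = 1 := by
      rw [← hGdeg]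
      exact hGmonic.coeff_natDegree
    conv_rhs => rw [hGsum]
    rw [hck, add_comm]
    congr 1
    · apply Finset.sum_congr rfl
      intro r _
      rw [Polynomial.C_mul_X_pow_eq_monomial]
    · rw [Polynomial.monomial_one_right_eq_X_pow]
  have hroot : ∀ i : Fin e, Polynomial.eval₂ (algebraMap _ (MvPolynomial (Fin e) K)) (X i) Gq
      = 0 := by
    intro i
    rw [← Polynomial.eval_map, hGqmap, rootProdB, Polynomial.eval_prod]
    apply Finset.prod_eq_zero (Finset.mem_univ i)
    rw [Polynomial.eval_pow, Polynomial.eval_sub, Polynomial.eval_X, Polynomial.eval_C, sub_self]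
    exact zero_pow (hpos i).ne'
  have hint : ∀ i : Fin e, IsIntegral (MvPolynomial (Fin (k + 1)) K ⧸ I)
      (X i : MvPolynomial (Fin e) K) := fun i => ⟨Gq, hGqmonic, hroot i⟩
  haveI hIntegral : Algebra.IsIntegral (MvPolynomial (Fin (k + 1)) K ⧸ I)
      (MvPolynomial (Fin e) K) := by
    constructor
    intro b
    have hadj : Algebra.adjoin (MvPolynomial (Fin (k + 1)) K ⧸ I)
        (Set.range (X : Fin e → MvPolynomial (Fin e) K)) = ⊤ := by
      rw [eq_top_iff]
      intro x _
      have hb : x ∈ (Algebra.adjoin K (Set.range (X : Fin e → MvPolynomial (Fin e) K))) := by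
        rw [MvPolynomial.adjoin_range_X]
        trivial
      have hle : Algebra.adjoin K (Set.range (X : Fin e → MvPolynomial (Fin e) K))
          ≤ (Algebra.adjoin (MvPolynomial (Fin (k + 1)) K ⧸ I)
            (Set.range (X : Fin e → MvPolynomial (Fin e) K))).restrictScalars K :=
        Algebra.adjoin_le fun y hy => Algebra.subset_adjoin hy
      exact hle hb
    have h2 : Algebra.adjoin (MvPolynomial (Fin (k + 1)) K ⧸ I)
        (Set.range (X : Fin e → MvPolynomial (Fin e) K))
        ≤ integralClosure (MvPolynomial (Fin (k + 1)) K ⧸ I) (MvPolynomial (Fin e) K) := by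
      apply Algebra.adjoin_le
      rintro x ⟨i, rfl⟩
      exact hint i
    exact h2 (hadj ▸ Algebra.mem_top)
  have hχsurj : Function.Surjective χ.toRingHom := by
    intro c
    refine ⟨algebraMap K _ c, ?_⟩
    show χ (algebraMap K _ c) = c
    rw [AlgHom.commutes]
    rfl
  haveI hpmax : (RingHom.ker χ.toRingHom).IsMaximal :=
    RingHom.ker_isMaximal_of_surjective _ hχsurj
  obtain ⟨m, hmmax, hmcomap⟩ := Ideal.exists_ideal_over_maximal_of_isIntegral
    (S := MvPolynomial (Fin e) K) (RingHom.ker χ.toRingHom)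
    (by
      intro x hx
      rw [RingHom.mem_ker, halg] at hx
      have hx0 : x = 0 := hInj (by rw [show ι x = 0 from hx]; exact (map_zero ι).symm)
      rw [hx0]
      exact Ideal.zero_mem _)
  obtain ⟨t, hmt⟩ := (MvPolynomial.isMaximal_iff_eq_vanishingIdeal_singleton (I := m)).mp hmmax
  have key : ∀ x : MvPolynomial (Fin (k + 1)) K ⧸ I, eval t (ι x) = χ x := by
    intro x
    have hx : x - algebraMap K _ (χ x) ∈ RingHom.ker χ.toRingHom := by
      rw [RingHom.mem_ker]
      show χ (x - algebraMap K _ (χ x)) = 0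
      rw [map_sub, AlgHom.commutes]
      show χ x - χ x = 0
      ring
    rw [← hmcomap, Ideal.mem_comap, hmt, MvPolynomial.mem_vanishingIdeal_singleton_iff] at hx
    rw [halg] at hx
    have hc : (ι.toRingHom) (x - algebraMap K _ (χ x)) = ι x - C (χ x) := by
      show ι (x - algebraMap K _ (χ x)) = ι x - C (χ x)
      rw [map_sub]
      congr 1
      show (algebraMap (MvPolynomial (Fin (k + 1)) K ⧸ I) (MvPolynomial (Fin e) K))
        ((algebraMap K _) (χ x)) = C (χ x)
      rw [← IsScalarTower.algebraMap_apply K _ (MvPolynomial (Fin e) K), algebraMap_eq]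
    rw [hc, map_sub] at hx
    simp only [aeval_C, Algebra.algebraMap_self, RingHom.id_apply, coe_aeval_eq_eval] at hx
    exact sub_eq_zero.mp hx
  refine ⟨t, fun j => ?_⟩
  have h1 : χ (Ideal.Quotient.mk I (X j)) = v j := by
    rw [hχmk]
    exact aeval_X v j
  have h2 : eval t (ι (Ideal.Quotient.mk I (X j)))
      = eval t ((rootProdB K e lam).coeff (k - (j : ℕ))) := by
    rw [hιmk]
    show eval t (ψ (X j)) = _
    rw [psiMap_X]
  rw [← h1, ← key, h2]
  rw [show eval t ((rootProdB K e lam).coeff (k - (j : ℕ)))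
    = ((rootProdB K e lam).map (eval t)).coeff (k - (j : ℕ)) from (Polynomial.coeff_map _ _).symm]
  rw [map_rootProdB]

end Part5

section Part6
variable {K : Type*} [Field K]

lemma degree_eq_sum_univ {n : ℕ} (d : Fin n →₀ ℕ) : d.degree = ∑ i, d i := by
  rw [Finsupp.degree_apply, Finset.sum_subset (Finset.subset_univ d.support)]
  intro x _ hx
  simpa using hx

lemma sum_eq_degree {n : ℕ} (d : Fin n →₀ ℕ) : (d.sum fun _ e => e) = d.degree := rfl

/-- homogenization of a polynomial with respect to the 0-th variable -/
noncomputable def homogenize (k : ℕ) (p : MvPolynomial (Fin (k + 1)) K) :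
    MvPolynomial (Fin (k + 1)) K :=
  ∑ d ∈ p.support, monomial (d + Finsupp.single 0 (p.totalDegree - d.degree)) (coeff d p)

lemma homogenize_isHomogeneous (k : ℕ) (p : MvPolynomial (Fin (k + 1)) K) :
    (homogenize k p).IsHomogeneous p.totalDegree := by
  apply IsHomogeneous.sum
  intro d hd
  apply isHomogeneous_monomial
  have hle : d.degree ≤ p.totalDegree := by
    rw [← sum_eq_degree]
    exact le_totalDegree hd
  rw [degree_eq_sum_univ]
  simp only [Finsupp.add_apply]
  rw [Finset.sum_add_distrib, ← degree_eq_sum_univ]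
  rw [show ∑ i, Finsupp.single (0 : Fin (k+1)) (p.totalDegree - d.degree) i
    = p.totalDegree - d.degree from ?_]
  · omega
  · rw [Finset.sum_eq_single 0]
    · simp
    · intro i _ hi
      rw [Finsupp.single_apply, if_neg (by exact fun h => hi h.symm)]
    · simp

lemma eval_homogenize {k : ℕ} (p : MvPolynomial (Fin (k + 1)) K) {b : Fin (k + 1) → K}
    (hb0 : b 0 ≠ 0) :
    eval b (homogenize k p) = b 0 ^ p.totalDegree * eval (fun j => b j / b 0) p := by
  rw [homogenize, map_sum]
  conv_rhs => rw [eval_eq']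
  rw [Finset.mul_sum]
  apply Finset.sum_congr rfl
  intro d hd
  rw [eval_monomial]
  rw [Finsupp.prod_fintype _ _ (fun i => pow_zero (b i))]
  have hle : d.degree ≤ p.totalDegree := by
    rw [← sum_eq_degree]
    exact le_totalDegree hd
  have hsingle : ∏ i, b i ^ (Finsupp.single (0 : Fin (k+1)) (p.totalDegree - d.degree)) i
      = b 0 ^ (p.totalDegree - d.degree) := by
    rw [Finset.prod_eq_single 0]
    · simp
    · intro i _ hi
      rw [Finsupp.single_apply, if_neg (by exact fun h => hi h.symm), pow_zero]
    · simp
  simp only [Finsupp.add_apply]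
  simp_rw [pow_add]
  rw [Finset.prod_mul_distrib, hsingle]
  have hprod : ∏ i, (b i / b 0) ^ d i = (∏ i, b i ^ d i) / b 0 ^ d.degree := by
    simp_rw [div_pow]
    rw [Finset.prod_div_distrib, Finset.prod_pow_eq_pow_sum, ← degree_eq_sum_univ]
  rw [hprod]
  have hsplit : b 0 ^ p.totalDegree = b 0 ^ (p.totalDegree - d.degree) * b 0 ^ d.degree := by
    rw [← pow_add]
    congr 1
    omega
  rw [hsplit]
  have hb0d : (b 0 : K) ^ d.degree ≠ 0 := pow_ne_zero _ hb0
  field_simp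

end Part6

section Part7
variable {K : Type*} [Field K]

lemma aeval_pt {σ : Type*} (w : σ → K) (q : MvPolynomial σ K) : aeval w q = eval w q := by
  rw [← coe_aeval_eq_eval]
  rfl

lemma eval_aeval_comp {σ τ : Type*} (w : τ → K) (g : σ → MvPolynomial τ K)
    (F : MvPolynomial σ K) :
    eval w (aeval g F) = eval (fun i => eval w (g i)) F := by
  have h := congrFun (congrArg (fun (φ : MvPolynomial σ K →ₐ[K] K) => (φ : MvPolynomial σ K → K))
    (comp_aeval (φ := aeval w) (f := g))) F
  simp only [AlgHom.coe_comp, Function.comp_apply] at h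
  have harg : (fun i => aeval w (g i)) = (fun i => eval w (g i)) := by
    funext i
    rw [aeval_pt]
  rw [← aeval_pt w (aeval g F), h, harg, aeval_pt]

/-- Existence of a shear making the top coefficient nonzero. -/
lemma exists_shear_ne {k : ℕ} {a : Fin (k + 1) → K} [Infinite K] (ha : a ≠ 0) :
    ∃ s : K, shear k s a 0 ≠ 0 := by
  set P : Polynomial K := ∑ j : Fin (k + 1), Polynomial.C (a j) * Polynomial.X ^ (j : ℕ) with hP
  have hcoeff : ∀ j : Fin (k + 1), P.coeff (j : ℕ) = a j := by
    intro j₀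
    rw [hP, Polynomial.finset_sum_coeff, Finset.sum_eq_single j₀]
    · simp
    · intro i _ hij
      rw [Polynomial.coeff_C_mul, Polynomial.coeff_X_pow, if_neg, mul_zero]
      exact fun h => hij (Fin.ext h.symm)
    · simp
  have hPne : P ≠ 0 := by
    intro h0
    apply ha
    funext j
    rw [← hcoeff j, h0]
    simp
  obtain ⟨s, hs⟩ : ∃ s : K, P.eval s ≠ 0 := by
    by_contra hall
    push_neg at hall
    exact hPne (Polynomial.zero_of_eval_zero _ hall)
  refine ⟨s, ?_⟩
  have heval : shear k s a 0 = P.eval s := by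
    rw [shear_apply, hP, Polynomial.eval_finset_sum]
    apply Finset.sum_congr rfl
    intro j _
    rw [if_pos (by simp : (((0 : Fin (k + 1)) : ℕ) ≤ (j : ℕ)))]
    simp only [Fin.val_zero, Nat.choose_zero_right, Nat.cast_one, one_mul, Nat.sub_zero,
      Polynomial.eval_mul, Polynomial.eval_C, Polynomial.eval_pow, Polynomial.eval_X]
    ring
  rw [heval]
  exact hs

/-- Direction A wrapper: on the cone with `b 0 ≠ 0`, kernel elements vanish at
the normalized coefficients. -/
lemma crCone_kernel_vanish {k e : ℕ} {lam : Fin e → ℕ} (hpos : ∀ i, 0 < lam i)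
    (hsum : ∑ i, lam i = k) {b : Fin (k + 1) → K}
    (hb : b ∈ crCone k lam) (hb0 : b 0 ≠ 0) {p : MvPolynomial (Fin (k + 1)) K}
    (hp : p ∈ RingHom.ker (psiMap K k e lam).toRingHom) :
    eval (fun j => b j / b 0) p = 0 := by
  obtain ⟨t, ht⟩ := crCone_factor hpos hsum hb hb0
  have hv : ∀ j : Fin (k + 1), b j / b 0
      = (∏ i, (Polynomial.X - Polynomial.C (t i)) ^ lam i).coeff (k - (j : ℕ)) := by
    intro j
    have h1 := coeff_sumform k b j
    rw [ht, Polynomial.coeff_C_mul] at h1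
    rw [← h1, mul_comm, mul_div_assoc, div_self hb0, mul_one]
  have hcomp : eval (fun j => b j / b 0) p = eval t (psiMap K k e lam p) := by
    rw [show psiMap K k e lam p
      = aeval (fun j : Fin (k+1) => (rootProdB K e lam).coeff (k - (j : ℕ))) p from rfl]
    rw [eval_aeval_comp]
    have harg : (fun i : Fin (k+1) => eval t ((rootProdB K e lam).coeff (k - (i : ℕ))))
        = fun j : Fin (k+1) => b j / b 0 := by
      funext j
      rw [hv j, show eval t ((rootProdB K e lam).coeff (k - (j : ℕ)))
        = ((rootProdB K e lam).map (eval t)).coeff (k - (j : ℕ))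
        from (Polynomial.coeff_map _ _).symm, map_rootProdB]
    rw [harg]
  rw [hcomp, show psiMap K k e lam p = 0 from hp]
  simp

/-- Direction B wrapper: reconstruct cone membership from normalized coefficients. -/
lemma mem_crCone_of_coeffs [IsAlgClosed K] {k e : ℕ} {lam : Fin e → ℕ} (hk : 0 < k)
    (hpos : ∀ i, 0 < lam i) (hsum : ∑ i, lam i = k) {b : Fin (k + 1) → K} (hb0 : b 0 ≠ 0)
    (t : Fin e → K)
    (ht : ∀ j : Fin (k + 1), b j / b 0
      = (∏ i, (Polynomial.X - Polynomial.C (t i)) ^ lam i).coeff (k - (j : ℕ))) :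
    b ∈ crCone k lam := by
  have he : 0 < e := by
    by_contra h0
    push_neg at h0
    interval_cases e
    simp at hsum
    omega
  set i₀ : Fin e := ⟨0, he⟩ with hi₀
  obtain ⟨w, hw⟩ := IsAlgClosed.exists_pow_nat_eq (b 0) (hpos i₀)
  set γ : Fin e → K := fun i => if i = i₀ then w else 1 with hγ
  set L : Fin e → MvPolynomial (Fin 2) K := fun i => C (γ i) * (X 0 - C (t i) * X 1) with hL
  have hLhom : ∀ i, (L i).IsHomogeneous 1 := by
    intro i
    rw [hL]
    exact (((isHomogeneous_X K (0 : Fin 2)).sub (isHomogeneous_C_mul_X (t i) 1))).C_mul _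
  have hprodγ : ∏ i, γ i ^ lam i = b 0 := by
    rw [← hw, hγ]
    rw [Finset.prod_eq_single i₀]
    · simp
    · intro i _ hi
      simp [if_neg hi]
    · simp
  have hRhom : (∏ i, L i ^ lam i).IsHomogeneous k := by
    rw [← hsum]
    apply IsHomogeneous.prod
    intro i _
    have := (hLhom i).pow (lam i)
    rwa [one_mul] at this
  have hstruct := isHomogeneous_eq_binForm hRhom
  set c : Fin (k + 1) → K := fun j => coeff (mexp k (j : ℕ)) (∏ i, L i ^ lam i) with hc
  have htoUniL : ∀ i, toUni (L i) = Polynomial.C (γ i) * (Polynomial.X - Polynomial.C (t i)) := by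
    intro i
    rw [hL, toUni]
    simp [algebraMap_eq]
  have htoUni : toUni (∏ i, L i ^ lam i)
      = Polynomial.C (b 0) * ∏ i, (Polynomial.X - Polynomial.C (t i)) ^ lam i := by
    rw [map_prod]
    simp_rw [map_pow, htoUniL, mul_pow]
    rw [Finset.prod_mul_distrib]
    congr 1
    rw [← hprodγ, map_prod]
    simp_rw [map_pow]
  have hcb : c = b := by
    funext j
    have h1 : toUni (binForm k c) = Polynomial.C (b 0)
        * ∏ i, (Polynomial.X - Polynomial.C (t i)) ^ lam i := by
      rw [← hstruct]
      exact htoUni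
    rw [toUni_binForm] at h1
    have h2 := coeff_sumform k c j
    rw [h1, Polynomial.coeff_C_mul] at h2
    rw [← h2, ← ht j]
    field_simp
  refine ⟨L, hLhom, ?_⟩
  rw [← hcb, hstruct]

end Part7

/-- The coincident root locus `X_λ` of a partition `λ` of `k > 0` is Zariski-closed in
`ℙ^k(K)`: its affine cone is the common zero locus of a set of homogeneous polynomials in
the coefficients `a₀,…,a_k`. -/
theorem coincident_root_locus_closed {K : Type*} [Field K] [IsAlgClosed K]
    (k e : ℕ) (hk : 0 < k) (lam : Fin e → ℕ)
    (hpos : ∀ i, 0 < lam i) (hsum : ∑ i, lam i = k) :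
    ∃ T : Set (MvPolynomial (Fin (k + 1)) K),
      (∀ F ∈ T, ∃ d : ℕ, F.IsHomogeneous d) ∧
      crCone k lam = {a | ∀ F ∈ T, eval a F = 0} := by
  classical
  refine ⟨{F | (∃ d : ℕ, F.IsHomogeneous d) ∧ ∀ a ∈ crCone k lam, eval a F = 0},
    fun F hF => hF.1, ?_⟩
  apply Set.eq_of_subset_of_subset
  · intro a ha F hF
    exact hF.2 a ha
  · intro a ha
    by_cases ha0 : a = 0
    · rw [ha0]
      exact zero_mem_crCone lam hk hpos hsum
    obtain ⟨s, hs⟩ := exists_shear_ne (k := k) ha0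
    have hvanish : ∀ p ∈ RingHom.ker (psiMap K k e lam).toRingHom,
        aeval (fun j => shear k s a j / shear k s a 0) p = 0 := by
      intro p hp
      have hThom : ∃ d : ℕ, (aeval (shearPoly k s)
          ((X (0 : Fin (k+1)) : MvPolynomial (Fin (k+1)) K) * homogenize k p)).IsHomogeneous d := by
        refine ⟨1 * (1 + p.totalDegree), ?_⟩
        exact ((isHomogeneous_X K (0 : Fin (k+1))).mul (homogenize_isHomogeneous k p)).aeval
          (shearPoly k s) (fun i => isHomogeneous_shearPoly k s i)
      have hTvan : ∀ a' ∈ crCone k lam, eval a' (aeval (shearPoly k s)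
          ((X (0 : Fin (k+1)) : MvPolynomial (Fin (k+1)) K) * homogenize k p)) = 0 := by
        intro a' ha'
        rw [eval_aeval_comp]
        rw [show (fun i => eval a' (shearPoly k s i)) = shear k s a' from rfl]
        rw [map_mul, eval_X]
        by_cases hb'0 : shear k s a' 0 = 0
        · rw [hb'0, zero_mul]
        · rw [eval_homogenize _ hb'0]
          rw [crCone_kernel_vanish hpos hsum (crCone_shear s ha') hb'0 hp]
          ring
      have h0 := ha _ ⟨hThom, hTvan⟩
      rw [eval_aeval_comp] at h0
      rw [show (fun i => eval a (shearPoly k s i)) = shear k s a from rfl] at h0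
      rw [map_mul, eval_X, eval_homogenize _ hs] at h0
      rw [aeval_pt]
      have h1 : shear k s a 0 * (shear k s a 0 ^ p.totalDegree
          * eval (fun j => shear k s a j / shear k s a 0) p) = 0 := h0
      rcases mul_eq_zero.mp h1 with h | h
      · exact absurd h hs
      rcases mul_eq_zero.mp h with h2 | h2
      · exact absurd h2 (pow_ne_zero _ hs)
      · exact h2
    obtain ⟨t, ht⟩ := lift_point hk hpos hsum _ hvanish
    have hbmem : shear k s a ∈ crCone k lam :=
      mem_crCone_of_coeffs hk hpos hsum hs t (fun j => ht j)
    have hmem := crCone_shear (-s) hbmem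
    rw [shear_neg_shear] at hmem
    exact hmem
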